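/- F_λ is differentiable on U, and for every n ∈ ℕ and every z ∈ U: ∑_{k=1}^r z_k^n·( z_k·(∂F_λ/∂z_k)(z) + ((n+1)/2·γ_k² − λ·γ_k)·F_λ(z) ) = (1/2)·∑_{k=0}^n (γ₁z₁^k + … + γ_r z_r^k)·(γ₁z₁^{n−k} + … + γ_r z_r^{n−k})·F_λ(z). -/

import Mathlib

open Complex Finset

lemma geom_div {x y : ℂ} (h : x ≠ y) (n : ℕ) :
    (x - y)⁻¹ * (x ^ (n+1) - y ^ (n+1)) = ∑ m ∈ range (n+1), x ^ m * y ^ (n - m) := by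
  have h2 : x - y ≠ 0 := sub_ne_zero.mpr h
  have hg := geom_sum₂_mul x y (n+1)
  simp only [Nat.add_sub_cancel] at hg
  rw [← hg, mul_comm ((x-y)⁻¹), mul_assoc, mul_inv_cancel₀ h2, mul_one]


lemma pair_split {M : Type*} [AddCommMonoid M] {r : ℕ} (f : Fin r × Fin r → M) :
    ∑ p : Fin r × Fin r, f p =
      (∑ p ∈ univ.filter (fun p : Fin r × Fin r => p.1 < p.2), (f p + f p.swap)) +
        ∑ i : Fin r, f (i, i) := by
  rw [Finset.sum_add_distrib]
  have h1 : ∑ p ∈ univ.filter (fun p : Fin r × Fin r => p.1 < p.2), f p.swap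
      = ∑ p ∈ univ.filter (fun p : Fin r × Fin r => p.2 < p.1), f p := by
    refine Finset.sum_nbij' Prod.swap Prod.swap ?_ ?_ ?_ ?_ ?_ <;>
      simp [Prod.swap]
  have h2 : ∑ i : Fin r, f (i, i)
      = ∑ p ∈ univ.filter (fun p : Fin r × Fin r => p.1 = p.2), f p := by
    rw [show (univ.filter (fun p : Fin r × Fin r => p.1 = p.2)) = Finset.diag univ by
      ext p; simp [Finset.mem_diag], Finset.sum_diag]
  rw [h1, h2]
  have key : ∀ p : Fin r × Fin r, (p.1 < p.2 ∨ p.2 < p.1 ∨ p.1 = p.2) := by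
    intro p; rcases lt_trichotomy p.1 p.2 with h | h | h <;> tauto
  rw [← Finset.sum_filter_add_sum_filter_not univ (fun p : Fin r × Fin r => p.1 < p.2) f,
    add_assoc]
  congr 1
  rw [← Finset.sum_filter_add_sum_filter_not (univ.filter (fun p : Fin r × Fin r => ¬ p.1 < p.2))
    (fun p : Fin r × Fin r => p.2 < p.1) f]
  congr 1
  · apply Finset.sum_congr _ (fun _ _ => rfl)
    rw [Finset.filter_filter]
    apply Finset.filter_congr
    intro p _
    constructor
    · intro h; exact h.2
    · intro h; exact ⟨lt_asymm h, h⟩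
  · apply Finset.sum_congr _ (fun _ _ => rfl)
    rw [Finset.filter_filter]
    apply Finset.filter_congr
    intro p _
    constructor
    · rintro ⟨h1', h2'⟩
      exact le_antisymm (not_lt.mp h2') (not_lt.mp h1')
    · intro h; exact ⟨by simp [h], by simp [h]⟩

lemma alg {r : ℕ} (n : ℕ) (γ : Fin r → ℂ) (lam : ℂ) (w : Fin r → ℂ)
    (hw0 : ∀ i, w i ≠ 0) (hinj : ∀ i j : Fin r, i < j → w i ≠ w j) :
    ∑ k : Fin r, w k ^ n *
        (w k * ((∑ p ∈ univ.filter (fun p : Fin r × Fin r => p.1 < p.2),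
            γ p.1 * γ p.2 * (w p.1 - w p.2)⁻¹ *
              ((if p.1 = k then (1:ℂ) else 0) - (if p.2 = k then (1:ℂ) else 0))) +
          lam * γ k * (w k)⁻¹) +
        (((n : ℂ) + 1) / 2 * γ k ^ 2 - lam * γ k)) =
      (1 / 2) * ∑ m ∈ range (n + 1),
        (∑ j, γ j * w j ^ m) * (∑ j, γ j * w j ^ (n - m)) := by
  set P := univ.filter (fun p : Fin r × Fin r => p.1 < p.2) with hP
  set S : Fin r → Fin r → ℂ := fun i j => ∑ m ∈ range (n+1), w i ^ m * w j ^ (n - m) with hS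
  have hS_symm : ∀ i j : Fin r, S i j = S j i := by
    intro i j
    rw [hS]
    simp only
    rw [← Finset.sum_range_reflect]
    refine Finset.sum_congr rfl fun m hm => ?_
    rw [Finset.mem_range] at hm
    rw [show n + 1 - 1 - m = n - m by omega, Nat.sub_sub_self (by omega : m ≤ n)]
    ring
  have hS_diag : ∀ i : Fin r, S i i = ((n : ℂ) + 1) * w i ^ n := by
    intro i
    have e : ∀ m ∈ range (n+1), w i ^ m * w i ^ (n - m) = w i ^ n := by
      intro m hm
      rw [← pow_add, show m + (n - m) = n by rw [Finset.mem_range] at hm; omega]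
    rw [hS]
    simp only
    rw [Finset.sum_congr rfl e, Finset.sum_const, Finset.card_range, nsmul_eq_mul]
    push_cast; ring
  -- LHS
  have hL : ∑ k : Fin r, w k ^ n *
        (w k * ((∑ p ∈ P,
            γ p.1 * γ p.2 * (w p.1 - w p.2)⁻¹ *
              ((if p.1 = k then (1:ℂ) else 0) - (if p.2 = k then (1:ℂ) else 0))) +
          lam * γ k * (w k)⁻¹) +
        (((n : ℂ) + 1) / 2 * γ k ^ 2 - lam * γ k)) =
      (∑ p ∈ P, γ p.1 * γ p.2 * S p.1 p.2) +
        ((n : ℂ) + 1) / 2 * ∑ k, γ k ^ 2 * w k ^ n := by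
    have hterm : ∀ k : Fin r, w k ^ n *
        (w k * ((∑ p ∈ P,
            γ p.1 * γ p.2 * (w p.1 - w p.2)⁻¹ *
              ((if p.1 = k then (1:ℂ) else 0) - (if p.2 = k then (1:ℂ) else 0))) +
          lam * γ k * (w k)⁻¹) +
        (((n : ℂ) + 1) / 2 * γ k ^ 2 - lam * γ k)) =
      (∑ p ∈ P, w k ^ (n+1) * (γ p.1 * γ p.2 * (w p.1 - w p.2)⁻¹ *
          ((if p.1 = k then (1:ℂ) else 0) - (if p.2 = k then (1:ℂ) else 0)))) +
        ((n : ℂ) + 1) / 2 * (γ k ^ 2 * w k ^ n) := by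
      intro k
      rw [show ∀ (A L c d : ℂ), w k ^ n * (w k * (A + L) + (d - c)) =
          w k ^ (n+1) * A + (w k ^ n * (w k * L) + w k ^ n * (d - c)) from
        fun A L c d => by ring]
      rw [show w k * (lam * γ k * (w k)⁻¹) = lam * γ k by
        rw [mul_comm, mul_assoc, inv_mul_cancel₀ (hw0 k), mul_one]]
      rw [Finset.mul_sum]
      ring
    rw [Finset.sum_congr rfl fun k _ => hterm k, Finset.sum_add_distrib, ← Finset.mul_sum]
    congr 1
    rw [Finset.sum_comm]
    refine Finset.sum_congr rfl fun p hp => ?_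
    have hlt : p.1 < p.2 := by rw [hP, Finset.mem_filter] at hp; exact hp.2
    have hne : w p.1 ≠ w p.2 := hinj _ _ hlt
    have hterm2 : ∀ k : Fin r, w k ^ (n+1) * (γ p.1 * γ p.2 * (w p.1 - w p.2)⁻¹ *
          ((if p.1 = k then (1:ℂ) else 0) - (if p.2 = k then (1:ℂ) else 0))) =
        γ p.1 * γ p.2 * (w p.1 - w p.2)⁻¹ *
          ((if p.1 = k then w k ^ (n+1) else 0) - (if p.2 = k then w k ^ (n+1) else 0)) := by
      intro k
      by_cases h1 : p.1 = k <;> by_cases h2 : p.2 = k <;> simp [h1, h2] <;> try ring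
    rw [Finset.sum_congr rfl fun k _ => hterm2 k, ← Finset.mul_sum,
      Finset.sum_sub_distrib, Finset.sum_ite_eq, Finset.sum_ite_eq]
    simp only [Finset.mem_univ, if_true]
    rw [mul_assoc, geom_div hne n]
  rw [hL]
  -- RHS
  have hR : ∑ m ∈ range (n + 1), (∑ j, γ j * w j ^ m) * (∑ j, γ j * w j ^ (n - m)) =
      ∑ p : Fin r × Fin r, γ p.1 * γ p.2 * S p.1 p.2 := by
    have e1 : ∀ m, (∑ j, γ j * w j ^ m) * (∑ j, γ j * w j ^ (n - m)) =
        ∑ i, ∑ j, (γ i * w i ^ m) * (γ j * w j ^ (n - m)) := by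
      intro m
      rw [Finset.sum_mul]
      exact Finset.sum_congr rfl fun i _ => by rw [Finset.mul_sum]
    rw [Finset.sum_congr rfl fun m _ => e1 m, Finset.sum_comm, Fintype.sum_prod_type]
    refine Finset.sum_congr rfl fun i _ => ?_
    rw [Finset.sum_comm]
    refine Finset.sum_congr rfl fun j _ => ?_
    rw [hS]
    simp only
    rw [Finset.mul_sum]
    exact Finset.sum_congr rfl fun m _ => by ring
  rw [hR, pair_split (fun p : Fin r × Fin r => γ p.1 * γ p.2 * S p.1 p.2)]
  simp only [Prod.fst_swap, Prod.snd_swap]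
  have h3 : ∑ p ∈ P, (γ p.1 * γ p.2 * S p.1 p.2 + γ p.2 * γ p.1 * S p.2 p.1)
      = ∑ p ∈ P, 2 * (γ p.1 * γ p.2 * S p.1 p.2) :=
    Finset.sum_congr rfl fun p _ => by rw [hS_symm p.2 p.1]; ring
  have h4 : ∑ i : Fin r, γ i * γ i * S i i = ∑ i : Fin r, ((n:ℂ)+1) * (γ i ^ 2 * w i ^ n) :=
    Finset.sum_congr rfl fun i _ => by rw [hS_diag i]; ring
  rw [h3, h4, ← Finset.mul_sum, ← Finset.mul_sum]
  ring


/-- `F_λ(z) = ∏_{1≤i<j≤r} (z_i − z_j)^{γ_i γ_j} · ∏_{j=1}^r z_j^{λγ_j}`, with principal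
complex powers of positive real numbers. -/
noncomputable def Flam (r : ℕ) (γ : Fin r → ℂ) (lam : ℂ) (z : Fin r → ℝ) : ℂ :=
  (∏ p ∈ Finset.univ.filter (fun p : Fin r × Fin r => p.1 < p.2),
      (((z p.1 - z p.2 : ℝ)) : ℂ) ^ (γ p.1 * γ p.2)) *
    ∏ j, ((z j : ℝ) : ℂ) ^ (lam * γ j)

lemma nhds_good {r : ℕ} {z : Fin r → ℝ} (h1 : StrictAnti z) (h2 : ∀ i, 0 < z i) :
    ∀ᶠ w in nhds z, StrictAnti w ∧ ∀ i, 0 < w i := by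
  have hopen : IsOpen {w : Fin r → ℝ |
      (∀ p : Fin r × Fin r, p.1 < p.2 → w p.2 < w p.1) ∧ ∀ i, 0 < w i} := by
    rw [Set.setOf_and]
    refine IsOpen.inter ?_ ?_
    · rw [Set.setOf_forall]
      refine isOpen_iInter_of_finite fun p => ?_
      by_cases h : p.1 < p.2
      · simp only [h, true_implies]
        exact isOpen_lt (continuous_apply p.2) (continuous_apply p.1)
      · convert isOpen_univ
        ext w; simp [h]
    · rw [Set.setOf_forall]
      exact isOpen_iInter_of_finite fun i => isOpen_lt continuous_const (continuous_apply i)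
  have hmem : z ∈ {w : Fin r → ℝ |
      (∀ p : Fin r × Fin r, p.1 < p.2 → w p.2 < w p.1) ∧ ∀ i, 0 < w i} :=
    ⟨fun p hp => h1 hp, h2⟩
  filter_upwards [hopen.mem_nhds hmem] with w hw
  exact ⟨fun a b hab => hw.1 (a, b) hab, hw.2⟩

lemma Flam_eq {r : ℕ} (γ : Fin r → ℂ) (lam : ℂ) (z : Fin r → ℝ)
    (h1 : StrictAnti z) (h2 : ∀ i, 0 < z i) :
    Flam r γ lam z = Complex.exp (
      (∑ p ∈ univ.filter (fun p : Fin r × Fin r => p.1 < p.2),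
        γ p.1 * γ p.2 * ((Real.log (z p.1 - z p.2) : ℝ) : ℂ)) +
      ∑ j, lam * γ j * ((Real.log (z j) : ℝ) : ℂ)) := by
  rw [Complex.exp_add, Complex.exp_sum, Complex.exp_sum]
  unfold Flam
  congr 1
  · refine Finset.prod_congr rfl fun p hp => ?_
    have hpos : 0 < z p.1 - z p.2 := sub_pos.mpr (h1 (Finset.mem_filter.mp hp).2)
    rw [Complex.cpow_def_of_ne_zero
      (by exact_mod_cast hpos.ne' : ((z p.1 - z p.2 : ℝ) : ℂ) ≠ 0)]
    rw [← Complex.ofReal_log hpos.le, mul_comm]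
  · refine Finset.prod_congr rfl fun j _ => ?_
    rw [Complex.cpow_def_of_ne_zero
      (by exact_mod_cast (h2 j).ne' : ((z j : ℝ) : ℂ) ≠ 0)]
    rw [← Complex.ofReal_log (h2 j).le, mul_comm]

lemma Flam_hasFDerivAt {r : ℕ} (γ : Fin r → ℂ) (lam : ℂ) (z : Fin r → ℝ)
    (h1 : StrictAnti z) (h2 : ∀ i, 0 < z i) :
    HasFDerivAt (Flam r γ lam)
      (Flam r γ lam z •
        ((∑ p ∈ univ.filter (fun p : Fin r × Fin r => p.1 < p.2),
            (γ p.1 * γ p.2) • (Complex.ofRealCLM.comp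
              ((z p.1 - z p.2)⁻¹ •
                (ContinuousLinearMap.proj (R := ℝ) (φ := fun _ : Fin r => ℝ) p.1 -
                  ContinuousLinearMap.proj (R := ℝ) (φ := fun _ : Fin r => ℝ) p.2)))) +
          ∑ j, (lam * γ j) • (Complex.ofRealCLM.comp
            ((z j)⁻¹ • (ContinuousLinearMap.proj (R := ℝ) (φ := fun _ : Fin r => ℝ) j))))) z := by
  have hG : HasFDerivAt (fun w : Fin r → ℝ =>
      (∑ p ∈ univ.filter (fun p : Fin r × Fin r => p.1 < p.2),
        γ p.1 * γ p.2 * ((Real.log (w p.1 - w p.2) : ℝ) : ℂ)) +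
      ∑ j, lam * γ j * ((Real.log (w j) : ℝ) : ℂ))
      ((∑ p ∈ univ.filter (fun p : Fin r × Fin r => p.1 < p.2),
            (γ p.1 * γ p.2) • (Complex.ofRealCLM.comp
              ((z p.1 - z p.2)⁻¹ •
                (ContinuousLinearMap.proj (R := ℝ) (φ := fun _ : Fin r => ℝ) p.1 -
                  ContinuousLinearMap.proj (R := ℝ) (φ := fun _ : Fin r => ℝ) p.2)))) +
          ∑ j, (lam * γ j) • (Complex.ofRealCLM.comp
            ((z j)⁻¹ • (ContinuousLinearMap.proj (R := ℝ) (φ := fun _ : Fin r => ℝ) j)))) z := by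
    refine HasFDerivAt.add (HasFDerivAt.fun_sum fun p hp => ?_) (HasFDerivAt.fun_sum fun j _ => ?_)
    · have hpos : 0 < z p.1 - z p.2 := sub_pos.mpr (h1 (Finset.mem_filter.mp hp).2)
      have ha : HasFDerivAt (fun w : Fin r → ℝ => w p.1 - w p.2)
          (ContinuousLinearMap.proj p.1 - ContinuousLinearMap.proj p.2) z :=
        ((ContinuousLinearMap.proj (R := ℝ) (φ := fun _ : Fin r => ℝ) p.1).hasFDerivAt).sub
          ((ContinuousLinearMap.proj (R := ℝ) (φ := fun _ : Fin r => ℝ) p.2).hasFDerivAt)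
      have hb := (Real.hasDerivAt_log hpos.ne').comp_hasFDerivAt z ha
      exact (Complex.ofRealCLM.hasFDerivAt.comp z hb).const_mul _
    · have hb := (Real.hasDerivAt_log (h2 j).ne').comp_hasFDerivAt z
        ((ContinuousLinearMap.proj (R := ℝ) (φ := fun _ : Fin r => ℝ) j).hasFDerivAt)
      exact (Complex.ofRealCLM.hasFDerivAt.comp z hb).const_mul _
  have hE := hG.cexp
  rw [← Flam_eq γ lam z h1 h2] at hE
  have hev : Flam r γ lam =ᶠ[nhds z] (fun w =>
      Complex.exp ((∑ p ∈ univ.filter (fun p : Fin r × Fin r => p.1 < p.2),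
        γ p.1 * γ p.2 * ((Real.log (w p.1 - w p.2) : ℝ) : ℂ)) +
      ∑ j, lam * γ j * ((Real.log (w j) : ℝ) : ℂ))) := by
    filter_upwards [nhds_good h1 h2] with w hw
    exact Flam_eq γ lam w hw.1 hw.2
  exact (hev.hasFDerivAt_iff).mpr hE

theorem stmt16 (r : ℕ) (hr : 1 ≤ r) (γ : Fin r → ℂ) (lam : ℂ) :
    (∀ z : Fin r → ℝ, StrictAnti z → (∀ i, 0 < z i) →
      DifferentiableAt ℝ (Flam r γ lam) z) ∧
    ∀ n : ℕ, ∀ z : Fin r → ℝ, StrictAnti z → (∀ i, 0 < z i) →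
      ∑ k : Fin r, ((z k : ℝ) : ℂ) ^ n *
          (((z k : ℝ) : ℂ) * fderiv ℝ (Flam r γ lam) z (Pi.single k 1) +
            (((n : ℂ) + 1) / 2 * γ k ^ 2 - lam * γ k) * Flam r γ lam z) =
        (1 / 2) * ∑ k ∈ Finset.range (n + 1),
          (∑ j, γ j * ((z j : ℝ) : ℂ) ^ k) * (∑ j, γ j * ((z j : ℝ) : ℂ) ^ (n - k)) *
            Flam r γ lam z := by
  constructor
  · exact fun z h1 h2 => (Flam_hasFDerivAt γ lam z h1 h2).differentiableAt
  intro n z h1 h2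
  set w : Fin r → ℂ := fun j => ((z j : ℝ) : ℂ) with hw
  have hw0 : ∀ i, w i ≠ 0 := fun i => Complex.ofReal_ne_zero.mpr (h2 i).ne'
  have hinj : ∀ i j : Fin r, i < j → w i ≠ w j := by
    intro i j hij
    simp only [hw, ne_eq, Complex.ofReal_inj]
    exact (h1 hij).ne'
  have hfd : ∀ k : Fin r, fderiv ℝ (Flam r γ lam) z (Pi.single k 1) =
      Flam r γ lam z * ((∑ p ∈ univ.filter (fun p : Fin r × Fin r => p.1 < p.2),
          γ p.1 * γ p.2 * (w p.1 - w p.2)⁻¹ *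
            ((if p.1 = k then (1:ℂ) else 0) - (if p.2 = k then (1:ℂ) else 0))) +
        lam * γ k * (w k)⁻¹) := by
    intro k
    rw [(Flam_hasFDerivAt γ lam z h1 h2).fderiv]
    simp only [ContinuousLinearMap.smul_apply, ContinuousLinearMap.add_apply,
      ContinuousLinearMap.coe_sum', Finset.sum_apply,
      ContinuousLinearMap.coe_comp', Function.comp_apply, ContinuousLinearMap.coe_smul',
      Pi.smul_apply, ContinuousLinearMap.sub_apply, ContinuousLinearMap.proj_apply,
      Complex.ofRealCLM_apply, smul_eq_mul, Pi.single_apply]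
    congr 1
    congr 1
    · refine Finset.sum_congr rfl fun p hp => ?_
      have hlt : p.1 < p.2 := (Finset.mem_filter.mp hp).2
      have hne : z p.1 - z p.2 ≠ 0 := sub_ne_zero.mpr (h1 hlt).ne'
      push_cast [apply_ite (fun x : ℝ => (x : ℂ))]
      ring
    · rw [Finset.sum_congr rfl (fun j (_ : j ∈ univ) => by
        push_cast [apply_ite (fun x : ℝ => (x : ℂ))]; split_ifs <;> simp [hw] :
        ∀ j ∈ univ, (lam * γ j) * (((z j)⁻¹ * (if j = k then (1:ℝ) else 0) : ℝ) : ℂ)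
          = if j = k then lam * γ j * (w j)⁻¹ else 0)]
      rw [Finset.sum_ite_eq' univ k (fun j => lam * γ j * (w j)⁻¹)]
      simp
  simp only [hfd]
  calc ∑ k : Fin r, w k ^ n *
          (w k * (Flam r γ lam z * ((∑ p ∈ univ.filter (fun p : Fin r × Fin r => p.1 < p.2),
              γ p.1 * γ p.2 * (w p.1 - w p.2)⁻¹ *
                ((if p.1 = k then (1:ℂ) else 0) - (if p.2 = k then (1:ℂ) else 0))) +
            lam * γ k * (w k)⁻¹)) +
            (((n : ℂ) + 1) / 2 * γ k ^ 2 - lam * γ k) * Flam r γ lam z)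
      = Flam r γ lam z * ∑ k : Fin r, w k ^ n *
          (w k * ((∑ p ∈ univ.filter (fun p : Fin r × Fin r => p.1 < p.2),
              γ p.1 * γ p.2 * (w p.1 - w p.2)⁻¹ *
                ((if p.1 = k then (1:ℂ) else 0) - (if p.2 = k then (1:ℂ) else 0))) +
            lam * γ k * (w k)⁻¹) +
            (((n : ℂ) + 1) / 2 * γ k ^ 2 - lam * γ k)) := by
        rw [Finset.mul_sum]
        exact Finset.sum_congr rfl fun k _ => by ring
    _ = Flam r γ lam z * ((1 / 2) * ∑ m ∈ Finset.range (n + 1),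
          (∑ j, γ j * w j ^ m) * (∑ j, γ j * w j ^ (n - m))) := by
        rw [alg n γ lam w hw0 hinj]
    _ = (1 / 2) * ∑ k ∈ Finset.range (n + 1),
          (∑ j, γ j * w j ^ k) * (∑ j, γ j * w j ^ (n - k)) * Flam r γ lam z := by
        rw [show ∀ X : ℂ, Flam r γ lam z * (1 / 2 * X) = 1 / 2 * (X * Flam r γ lam z) from
          fun X => by ring, Finset.sum_mul]
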